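/- For every integer p ≥ 2 and every real κ > 0, (κ/p)/( 1/2 + √(1/4 + (κ/p)²) ) ≤ e₁(p,κ) ≤ (κ/p)/( 1/2 − 1/p + √((1/2 + 1/p)² + (κ/p)²) ). -/

import Mathlib

open MeasureTheory intervalIntegral
open Set

/-- `mInt p κ ℓ = ∫_{-1}^1 u^ℓ (1-u²)^{(p-3)/2} exp(κ u) du`. -/
noncomputable def mInt (p : ℕ) (κ : ℝ) (ℓ : ℕ) : ℝ :=
  ∫ u in (-1 : ℝ)..1, u ^ ℓ * (1 - u ^ 2) ^ (((p : ℝ) - 3) / 2) * Real.exp (κ * u)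

/-- `e₁(p,κ) = E[U]` under `FvML_p(θ,κ)`. -/
noncomputable def e1 (p : ℕ) (κ : ℝ) : ℝ := mInt p κ 1 / mInt p κ 0


-- base integrability
lemma rpow_base_integrable {c : ℝ} (hc : -1 < c) :
    IntervalIntegrable (fun u : ℝ => (1 - u ^ 2) ^ c) volume (-1) 1 := by
  rcases le_or_gt 0 c with h0 | h0
  · apply ContinuousOn.intervalIntegrable
    apply ContinuousOn.rpow_const
    · exact (continuous_const.sub (continuous_pow 2)).continuousOn
    · intro x _; exact Or.inr h0
  · have base : IntervalIntegrable (fun x : ℝ => x ^ c) volume 0 1 :=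
      intervalIntegrable_rpow' hc
    have refl : IntervalIntegrable (fun x : ℝ => (1 - x) ^ c) volume 0 1 := by
      simpa using (base.comp_sub_left 1).symm
    have h01 : IntervalIntegrable (fun u : ℝ => (1 - u ^ 2) ^ c) volume 0 1 := by
      apply refl.mono_fun
      · rw [uIoc_of_le (by norm_num : (0:ℝ) ≤ 1),
          ← Measure.restrict_congr_set Ioo_ae_eq_Ioc]
        apply ContinuousOn.aestronglyMeasurable _ measurableSet_Ioo
        apply ContinuousOn.rpow_const
        · exact (continuous_const.sub (continuous_pow 2)).continuousOn
        · intro x hx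
          obtain ⟨h1, h2⟩ := hx
          left; nlinarith
      · filter_upwards [ae_restrict_mem measurableSet_uIoc] with x hx
        rw [uIoc_of_le (by norm_num : (0:ℝ) ≤ 1)] at hx
        obtain ⟨hx0, hx1⟩ := hx
        have h1 : (0:ℝ) ≤ 1 - x := by linarith
        have h2 : (0:ℝ) ≤ 1 + x := by linarith
        rw [Real.norm_eq_abs, Real.norm_eq_abs, abs_of_nonneg (Real.rpow_nonneg (by nlinarith) c),
          abs_of_nonneg (Real.rpow_nonneg h1 c)]
        have : (1 : ℝ) - x ^ 2 = (1 - x) * (1 + x) := by ring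
        rw [this, Real.mul_rpow h1 h2]
        have h3 : (1 + x) ^ c ≤ 1 :=
          Real.rpow_le_one_of_one_le_of_nonpos (by linarith) h0.le
        calc (1-x)^c * (1+x)^c ≤ (1-x)^c * 1 :=
              mul_le_mul_of_nonneg_left h3 (Real.rpow_nonneg h1 c)
          _ = (1-x)^c := by ring
    have hneg : IntervalIntegrable (fun u : ℝ => (1 - u ^ 2) ^ c) volume (-1) 0 := by
      have := ((IntervalIntegrable.iff_comp_neg (by simp)).mp h01)
      simp only [neg_zero, neg_neg] at this
      have heq : (fun x : ℝ => (1 - (-x) ^ 2) ^ c) = fun u : ℝ => (1 - u ^ 2) ^ c := by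
        funext x; rw [neg_pow]; norm_num
      rw [heq] at this
      exact this.symm
    exact hneg.trans h01

lemma intA {c : ℝ} (hc : -1 < c) {Q R : ℝ → ℝ} (hQ : Continuous Q) (hR : Continuous R) :
    IntervalIntegrable (fun u : ℝ => Q u * (1 - u ^ 2) ^ c * R u) volume (-1) 1 :=
  ((rpow_base_integrable hc).continuousOn_mul hQ.continuousOn).mul_continuousOn hR.continuousOn

lemma hc_lt {p : ℕ} (hp : 2 ≤ p) : (-1 : ℝ) < ((p : ℝ) - 3) / 2 := by
  have : (2 : ℝ) ≤ p := by exact_mod_cast hp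
  linarith

lemma cexp {p : ℕ} : (((p + 2 : ℕ) : ℝ) - 3) / 2 = ((p : ℝ) - 3) / 2 + 1 := by
  push_cast; ring

lemma contExp (κ : ℝ) : Continuous fun u : ℝ => Real.exp (κ * u) :=
  Real.continuous_exp.comp (continuous_const.mul continuous_id)

lemma intM {p : ℕ} (hp : 2 ≤ p) (κ : ℝ) (ℓ : ℕ) :
    IntervalIntegrable (fun u : ℝ => u ^ ℓ * (1 - u ^ 2) ^ (((p : ℝ) - 3) / 2) * Real.exp (κ * u))
      volume (-1) 1 :=
  intA (hc_lt hp) (continuous_pow ℓ) (contExp κ)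

-- identity (I) : κ * m₀(p+2) = (p-1) * m₁(p)
lemma idI {p : ℕ} (hp : 2 ≤ p) (κ : ℝ) :
    κ * mInt (p + 2) κ 0 = ((p : ℝ) - 1) * mInt p κ 1 := by
  set c : ℝ := ((p : ℝ) - 3) / 2 with hc_def
  have hp' : (2 : ℝ) ≤ p := by exact_mod_cast hp
  have hc : -1 < c := hc_lt hp
  have hc1 : 0 < c + 1 := by rw [hc_def]; linarith
  set F : ℝ → ℝ := fun u => (1 - u ^ 2) ^ (c + 1) * Real.exp (κ * u) with hF_def
  set f' : ℝ → ℝ := fun u =>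
    κ * (1 - u ^ 2) ^ (c + 1) * Real.exp (κ * u)
      - (2 * (c + 1)) * (u * (1 - u ^ 2) ^ c * Real.exp (κ * u)) with hf'_def
  have hderiv : ∀ x ∈ Ioo (-1 : ℝ) 1, HasDerivAt F (f' x) x := by
    intro x hx
    have hxpos : 0 < 1 - x ^ 2 := by obtain ⟨h1, h2⟩ := hx; nlinarith
    have h1 : HasDerivAt (fun u : ℝ => 1 - u ^ 2) (-(2 * x)) x := by
      simpa using ((hasDerivAt_pow 2 x).const_sub 1)
    have h2 := h1.rpow_const (p := c + 1) (Or.inl hxpos.ne')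
    have h3 : HasDerivAt (fun u : ℝ => Real.exp (κ * u)) (Real.exp (κ * x) * κ) x := by
      simpa using (((hasDerivAt_id x).const_mul κ).exp)
    have h4 := h2.mul h3
    refine h4.congr_deriv ?_
    rw [hf'_def]
    simp only [add_sub_cancel_right]
    ring
  have hcont : ContinuousOn F (Icc (-1 : ℝ) 1) := by
    apply ContinuousOn.mul
    · apply ContinuousOn.rpow_const
      · exact (continuous_const.sub (continuous_pow 2)).continuousOn
      · intro x _; exact Or.inr hc1.le
    · exact (contExp κ).continuousOn
  have hint1 : IntervalIntegrable
      (fun u : ℝ => κ * (1 - u ^ 2) ^ (c + 1) * Real.exp (κ * u)) volume (-1) 1 :=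
    intA (by linarith) continuous_const (contExp κ)
  have hint2 : IntervalIntegrable
      (fun u : ℝ => u * (1 - u ^ 2) ^ c * Real.exp (κ * u)) volume (-1) 1 :=
    intA hc continuous_id (contExp κ)
  have hint : IntervalIntegrable f' volume (-1) 1 := hint1.sub (hint2.const_mul _)
  have hftc := integral_eq_sub_of_hasDeriv_right_of_le (by norm_num : (-1 : ℝ) ≤ 1) hcont
    (fun x hx => (hderiv x hx).hasDerivWithinAt) hint
  have hF1 : F 1 = 0 := by
    rw [hF_def]; norm_num [Real.zero_rpow hc1.ne']
  have hFm1 : F (-1) = 0 := by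
    rw [hF_def]; norm_num [Real.zero_rpow hc1.ne']
  rw [hF1, hFm1, sub_zero] at hftc
  have hsplit : ∫ u in (-1 : ℝ)..1, f' u =
      κ * (∫ u in (-1 : ℝ)..1, (fun u : ℝ => 1 * (1 - u ^ 2) ^ (c + 1) * Real.exp (κ * u)) u)
        - (2 * (c + 1)) * ∫ u in (-1 : ℝ)..1, u * (1 - u ^ 2) ^ c * Real.exp (κ * u) := by
    have e1 : (fun u : ℝ => κ * (1 - u ^ 2) ^ (c + 1) * Real.exp (κ * u))
        = fun u : ℝ => κ * (1 * (1 - u ^ 2) ^ (c + 1) * Real.exp (κ * u)) := by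
      funext u; ring
    rw [hf'_def, integral_sub hint1 (hint2.const_mul _), e1, intervalIntegral.integral_const_mul,
      intervalIntegral.integral_const_mul]
  rw [hsplit] at hftc
  have hm2 : mInt (p + 2) κ 0 =
      ∫ u in (-1 : ℝ)..1, (fun u : ℝ => 1 * (1 - u ^ 2) ^ (c + 1) * Real.exp (κ * u)) u := by
    unfold mInt
    rw [cexp]
    apply integral_congr; intro u _; simp [hc_def]
  have hm1 : mInt p κ 1 = ∫ u in (-1 : ℝ)..1, u * (1 - u ^ 2) ^ c * Real.exp (κ * u) := by
    unfold mInt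
    apply integral_congr; intro u _; simp [hc_def]
  rw [hm2, hm1]
  have h2c : 2 * (c + 1) = (p : ℝ) - 1 := by rw [hc_def]; ring
  rw [← h2c]
  linarith [hftc]

-- identity (II) : m₀(p+2) + κ m₁(p+2) = (p-1) m₂(p)
lemma idII {p : ℕ} (hp : 2 ≤ p) (κ : ℝ) :
    mInt (p + 2) κ 0 + κ * mInt (p + 2) κ 1 = ((p : ℝ) - 1) * mInt p κ 2 := by
  set c : ℝ := ((p : ℝ) - 3) / 2 with hc_def
  have hp' : (2 : ℝ) ≤ p := by exact_mod_cast hp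
  have hc : -1 < c := hc_lt hp
  have hc1 : 0 < c + 1 := by rw [hc_def]; linarith
  set G : ℝ → ℝ := fun u => u * ((1 - u ^ 2) ^ (c + 1) * Real.exp (κ * u)) with hG_def
  set g' : ℝ → ℝ := fun u =>
    1 * (1 - u ^ 2) ^ (c + 1) * Real.exp (κ * u)
      + κ * (u * (1 - u ^ 2) ^ (c + 1) * Real.exp (κ * u))
      - (2 * (c + 1)) * (u ^ 2 * (1 - u ^ 2) ^ c * Real.exp (κ * u)) with hg'_def
  have hderiv : ∀ x ∈ Ioo (-1 : ℝ) 1, HasDerivAt G (g' x) x := by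
    intro x hx
    have hxpos : 0 < 1 - x ^ 2 := by obtain ⟨h1, h2⟩ := hx; nlinarith
    have h1 : HasDerivAt (fun u : ℝ => 1 - u ^ 2) (-(2 * x)) x := by
      simpa using ((hasDerivAt_pow 2 x).const_sub 1)
    have h2 := h1.rpow_const (p := c + 1) (Or.inl hxpos.ne')
    have h3 : HasDerivAt (fun u : ℝ => Real.exp (κ * u)) (Real.exp (κ * x) * κ) x := by
      simpa using (((hasDerivAt_id x).const_mul κ).exp)
    have h5 := (hasDerivAt_id x).mul (h2.mul h3)
    refine h5.congr_deriv ?_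
    rw [hg'_def]
    simp only [add_sub_cancel_right, id_eq, Pi.mul_apply]
    ring
  have hcont : ContinuousOn G (Icc (-1 : ℝ) 1) := by
    apply ContinuousOn.mul continuous_id.continuousOn
    apply ContinuousOn.mul
    · apply ContinuousOn.rpow_const
      · exact (continuous_const.sub (continuous_pow 2)).continuousOn
      · intro x _; exact Or.inr hc1.le
    · exact (contExp κ).continuousOn
  have hintA : IntervalIntegrable
      (fun u : ℝ => 1 * (1 - u ^ 2) ^ (c + 1) * Real.exp (κ * u)) volume (-1) 1 :=
    intA (by linarith) continuous_const (contExp κ)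
  have hintB : IntervalIntegrable
      (fun u : ℝ => u * (1 - u ^ 2) ^ (c + 1) * Real.exp (κ * u)) volume (-1) 1 :=
    intA (by linarith) continuous_id (contExp κ)
  have hintC : IntervalIntegrable
      (fun u : ℝ => u ^ 2 * (1 - u ^ 2) ^ c * Real.exp (κ * u)) volume (-1) 1 :=
    intA hc (continuous_pow 2) (contExp κ)
  have hint : IntervalIntegrable g' volume (-1) 1 :=
    (hintA.add (hintB.const_mul κ)).sub (hintC.const_mul _)
  have hftc := integral_eq_sub_of_hasDeriv_right_of_le (by norm_num : (-1 : ℝ) ≤ 1) hcont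
    (fun x hx => (hderiv x hx).hasDerivWithinAt) hint
  have hG1 : G 1 = 0 := by rw [hG_def]; norm_num [Real.zero_rpow hc1.ne']
  have hGm1 : G (-1) = 0 := by rw [hG_def]; norm_num [Real.zero_rpow hc1.ne']
  rw [hG1, hGm1, sub_zero] at hftc
  have hsplit : ∫ u in (-1 : ℝ)..1, g' u =
      (∫ u in (-1 : ℝ)..1, 1 * (1 - u ^ 2) ^ (c + 1) * Real.exp (κ * u))
        + κ * (∫ u in (-1 : ℝ)..1, u ^ 1 * (1 - u ^ 2) ^ (c + 1) * Real.exp (κ * u))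
        - (2 * (c + 1)) * ∫ u in (-1 : ℝ)..1, u ^ 2 * (1 - u ^ 2) ^ c * Real.exp (κ * u) := by
    rw [hg'_def, integral_sub (hintA.add (hintB.const_mul κ)) (hintC.const_mul _),
      integral_add hintA (hintB.const_mul κ), intervalIntegral.integral_const_mul, intervalIntegral.integral_const_mul]
    congr 2
    congr 1
    apply integral_congr; intro u _; simp
  rw [hsplit] at hftc
  have hm0 : mInt (p + 2) κ 0 =
      ∫ u in (-1 : ℝ)..1, 1 * (1 - u ^ 2) ^ (c + 1) * Real.exp (κ * u) := by
    unfold mInt; rw [cexp]; apply integral_congr; intro u _; simp [hc_def]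
  have hm1 : mInt (p + 2) κ 1 =
      ∫ u in (-1 : ℝ)..1, u ^ 1 * (1 - u ^ 2) ^ (c + 1) * Real.exp (κ * u) := by
    unfold mInt; rw [cexp]
  have hm2 : mInt p κ 2 = ∫ u in (-1 : ℝ)..1, u ^ 2 * (1 - u ^ 2) ^ c * Real.exp (κ * u) := rfl
  rw [hm0, hm1, hm2]
  have h2c : 2 * (c + 1) = (p : ℝ) - 1 := by rw [hc_def]; ring
  rw [← h2c]
  linarith [hftc]

-- m_{ℓ+2}(p) = m_ℓ(p) - m_ℓ(p+2)
lemma msplit {p : ℕ} (hp : 2 ≤ p) (κ : ℝ) (ℓ : ℕ) :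
    mInt p κ (ℓ + 2) = mInt p κ ℓ - mInt (p + 2) κ ℓ := by
  set c : ℝ := ((p : ℝ) - 3) / 2 with hc_def
  have hp' : (2 : ℝ) ≤ p := by exact_mod_cast hp
  have hc1 : 0 < c + 1 := by rw [hc_def]; linarith
  have h1 : mInt (p + 2) κ ℓ =
      ∫ u in (-1 : ℝ)..1, u ^ ℓ * (1 - u ^ 2) ^ (c + 1) * Real.exp (κ * u) := by
    unfold mInt; rw [cexp]
  rw [h1]
  unfold mInt
  rw [← integral_sub (intM hp κ ℓ) (intA (by linarith) (continuous_pow ℓ) (contExp κ))]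
  apply integral_congr
  intro u hu
  rw [uIcc_of_le (by norm_num : (-1:ℝ) ≤ 1)] at hu
  obtain ⟨hu1, hu2⟩ := hu
  have hx : (0:ℝ) ≤ 1 - u ^ 2 := by nlinarith
  have key : (1 - u ^ 2) ^ (c + 1) = (1 - u ^ 2) ^ c * (1 - u ^ 2) := by
    rcases eq_or_lt_of_le hx with h | h
    · rw [← h, Real.zero_rpow hc1.ne', mul_zero]
    · rw [Real.rpow_add_one h.ne']
  simp only [key, pow_add]
  ring

-- reflection of the full integral
lemma reflInt {F : ℝ → ℝ} (h : IntervalIntegrable F volume (-1) 1) :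
    ∫ u in (-1 : ℝ)..1, F u = ∫ u in (0 : ℝ)..1, (F u + F (-u)) := by
  have hsub1 : uIcc (-1 : ℝ) 0 ⊆ uIcc (-1 : ℝ) 1 := by
    rw [uIcc_of_le (by norm_num : (-1:ℝ) ≤ 0), uIcc_of_le (by norm_num : (-1:ℝ) ≤ 1)]
    exact Icc_subset_Icc le_rfl (by norm_num)
  have hsub2 : uIcc (0 : ℝ) 1 ⊆ uIcc (-1 : ℝ) 1 := by
    rw [uIcc_of_le (by norm_num : (0:ℝ) ≤ 1), uIcc_of_le (by norm_num : (-1:ℝ) ≤ 1)]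
    exact Icc_subset_Icc (by norm_num) le_rfl
  have h1 : IntervalIntegrable F volume (-1) 0 := h.mono_set hsub1
  have h2 : IntervalIntegrable F volume 0 1 := h.mono_set hsub2
  have h3 : IntervalIntegrable (fun u : ℝ => F (-u)) volume 0 1 := by
    have := (IntervalIntegrable.iff_comp_neg (by simp)).mp h1
    simp only [neg_neg, neg_zero] at this
    exact this.symm
  have hadd := integral_add_adjacent_intervals h1 h2
  have hneg : ∫ u in (-1 : ℝ)..0, F u = ∫ u in (0 : ℝ)..1, F (-u) := by
    rw [integral_comp_neg]; norm_num
  rw [← hadd, hneg, ← integral_add h3 h2]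
  congr 1; funext u; ring

-- reflected form of mInt
lemma mRefl {p : ℕ} (hp : 2 ≤ p) (κ : ℝ) (ℓ : ℕ) :
    mInt p κ ℓ = ∫ u in (0 : ℝ)..1,
      u ^ ℓ * (1 - u ^ 2) ^ (((p : ℝ) - 3) / 2) *
        (Real.exp (κ * u) + (-1 : ℝ) ^ ℓ * Real.exp (-(κ * u))) := by
  rw [mInt, reflInt (intM hp κ ℓ)]
  apply integral_congr
  intro u _
  have : (-u) ^ ℓ = (-1 : ℝ) ^ ℓ * u ^ ℓ := by rw [neg_pow]
  simp only [this, neg_sq, mul_neg]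
  ring

lemma m0_pos {p : ℕ} (hp : 2 ≤ p) (κ : ℝ) : 0 < mInt p κ 0 := by
  apply intervalIntegral_pos_of_pos_on (intM hp κ 0)
  · intro x hx
    obtain ⟨h1, h2⟩ := hx
    have : (0:ℝ) < 1 - x ^ 2 := by nlinarith
    have := Real.rpow_pos_of_pos this (((p : ℝ) - 3) / 2)
    positivity
  · norm_num

lemma m2_nonneg {p : ℕ} (hp : 2 ≤ p) (κ : ℝ) : 0 ≤ mInt p κ 2 := by
  apply intervalIntegral.integral_nonneg (by norm_num : (-1:ℝ) ≤ 1)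
  intro u hu
  obtain ⟨h1, h2⟩ := hu
  have hx : (0:ℝ) ≤ 1 - u ^ 2 := by nlinarith
  have := Real.rpow_nonneg hx (((p : ℝ) - 3) / 2)
  positivity

lemma m1_pos {p : ℕ} (hp : 2 ≤ p) {κ : ℝ} (hκ : 0 < κ) : 0 < mInt p κ 1 := by
  rw [mRefl hp κ 1]
  apply intervalIntegral_pos_of_pos_on
  · have base := intA (hc_lt hp)
      (Q := fun u : ℝ => u ^ 1)
      (R := fun u : ℝ => Real.exp (κ * u) + (-1:ℝ) * Real.exp ((-κ) * u))
      (continuous_pow 1)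
      ((contExp κ).add (continuous_const.mul (contExp (-κ))))
    have heq : (fun u : ℝ => u ^ 1 * (1 - u ^ 2) ^ (((p : ℝ) - 3) / 2) *
        (Real.exp (κ * u) + (-1:ℝ) ^ 1 * Real.exp (-(κ * u)))) =
        fun u : ℝ => u ^ 1 * (1 - u ^ 2) ^ (((p : ℝ) - 3) / 2) *
        (Real.exp (κ * u) + (-1:ℝ) * Real.exp ((-κ) * u)) := by
      funext u; simp [neg_mul]
    rw [heq]
    have hsub2 : uIcc (0 : ℝ) 1 ⊆ uIcc (-1 : ℝ) 1 := by
      rw [uIcc_of_le (by norm_num : (0:ℝ) ≤ 1), uIcc_of_le (by norm_num : (-1:ℝ) ≤ 1)]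
      exact Icc_subset_Icc (by norm_num) le_rfl
    exact (base.mono_set hsub2)
  · intro x hx
    obtain ⟨h1, h2⟩ := hx
    have hx2 : (0:ℝ) < 1 - x ^ 2 := by nlinarith
    have hr := Real.rpow_pos_of_pos hx2 (((p : ℝ) - 3) / 2)
    have hexp : Real.exp (-(κ * x)) < Real.exp (κ * x) := by
      apply Real.exp_lt_exp.mpr; nlinarith
    have : 0 < Real.exp (κ * x) + (-1:ℝ) ^ 1 * Real.exp (-(κ * x)) := by
      simp only [pow_one, neg_one_mul]; linarith
    positivity
  · norm_num

lemma sinh_mono_aux {x y : ℝ} (hx : 0 ≤ x) (hxy : x ≤ y) :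
    Real.sinh x * Real.cosh y ≤ Real.sinh y * Real.cosh x := by
  have h0 : Real.sinh (x - y) ≤ 0 := by
    rw [← Real.sinh_zero]
    exact Real.sinh_le_sinh.mpr (by linarith)
  rw [Real.sinh_sub] at h0
  linarith

lemma key_pt (κ u d : ℝ) (hu : 0 ≤ u) (hd : 0 ≤ d) (hκ : 0 ≤ κ) :
    0 ≤ (u ^ 2 - d ^ 2) *
      (u * (Real.exp (κ * u) - Real.exp (-(κ * u))) * Real.cosh (κ * d)
        - d * Real.sinh (κ * d) * (Real.exp (κ * u) + Real.exp (-(κ * u)))) := by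
  have hs : Real.exp (κ * u) - Real.exp (-(κ * u)) = 2 * Real.sinh (κ * u) := by
    rw [Real.sinh_eq]; ring
  have hcsh : Real.exp (κ * u) + Real.exp (-(κ * u)) = 2 * Real.cosh (κ * u) := by
    rw [Real.cosh_eq]; ring
  rw [hs, hcsh]
  have hsu : 0 ≤ Real.sinh (κ * u) := by
    rw [← Real.sinh_zero]; exact Real.sinh_le_sinh.mpr (by positivity)
  have hsd : 0 ≤ Real.sinh (κ * d) := by
    rw [← Real.sinh_zero]; exact Real.sinh_le_sinh.mpr (by positivity)
  have hcu : 0 < Real.cosh (κ * u) := Real.cosh_pos _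
  have hcd : 0 < Real.cosh (κ * d) := Real.cosh_pos _
  rcases le_total d u with h | h
  · have h1 : Real.sinh (κ * d) * Real.cosh (κ * u) ≤ Real.sinh (κ * u) * Real.cosh (κ * d) :=
      sinh_mono_aux (by positivity) (by nlinarith)
    have hA : d * (Real.sinh (κ * d) * Real.cosh (κ * u)) ≤
        u * (Real.sinh (κ * u) * Real.cosh (κ * d)) := by
      calc d * (Real.sinh (κ * d) * Real.cosh (κ * u))
          ≤ u * (Real.sinh (κ * d) * Real.cosh (κ * u)) := by
            apply mul_le_mul_of_nonneg_right h (by positivity)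
        _ ≤ u * (Real.sinh (κ * u) * Real.cosh (κ * d)) :=
            mul_le_mul_of_nonneg_left h1 hu
    apply mul_nonneg
    · nlinarith
    · nlinarith [hA]
  · have h1 : Real.sinh (κ * u) * Real.cosh (κ * d) ≤ Real.sinh (κ * d) * Real.cosh (κ * u) :=
      sinh_mono_aux (by positivity) (by nlinarith)
    have hA : u * (Real.sinh (κ * u) * Real.cosh (κ * d)) ≤
        d * (Real.sinh (κ * d) * Real.cosh (κ * u)) := by
      calc u * (Real.sinh (κ * u) * Real.cosh (κ * d))
          ≤ d * (Real.sinh (κ * u) * Real.cosh (κ * d)) := by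
            apply mul_le_mul_of_nonneg_right h (by positivity)
        _ ≤ d * (Real.sinh (κ * d) * Real.cosh (κ * u)) :=
            mul_le_mul_of_nonneg_left h1 hd
    have hf1 : u ^ 2 - d ^ 2 ≤ 0 := by nlinarith
    have hf2 : u * (2 * Real.sinh (κ * u)) * Real.cosh (κ * d)
        - d * Real.sinh (κ * d) * (2 * Real.cosh (κ * u)) ≤ 0 := by nlinarith [hA]
    nlinarith [mul_nonneg (neg_nonneg.mpr hf1) (neg_nonneg.mpr hf2)]

lemma intR {p : ℕ} (hp : 2 ≤ p) (κ : ℝ) (ℓ : ℕ) :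
    IntervalIntegrable (fun u : ℝ =>
      u ^ ℓ * (1 - u ^ 2) ^ (((p : ℝ) - 3) / 2) *
        (Real.exp (κ * u) + (-1 : ℝ) ^ ℓ * Real.exp (-(κ * u)))) volume 0 1 := by
  have hR : Continuous fun u : ℝ => Real.exp (κ * u) + (-1 : ℝ) ^ ℓ * Real.exp (-(κ * u)) := by
    apply (contExp κ).add
    apply continuous_const.mul
    simpa [neg_mul] using contExp (-κ)
  have base := intA (hc_lt hp) (continuous_pow ℓ) hR
  apply base.mono_set
  rw [uIcc_of_le (by norm_num : (0:ℝ) ≤ 1), uIcc_of_le (by norm_num : (-1:ℝ) ≤ 1)]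
  exact Icc_subset_Icc (by norm_num) le_rfl

lemma mono_m {p : ℕ} (hp : 2 ≤ p) {κ : ℝ} (hκ : 0 < κ) :
    mInt p κ 1 * mInt p κ 2 ≤ mInt p κ 0 * mInt p κ 3 := by
  set c : ℝ := ((p : ℝ) - 3) / 2 with hc_def
  have ha := m0_pos hp κ
  have hb := m1_pos hp hκ
  have hm2 := m2_nonneg hp κ
  set d : ℝ := Real.sqrt (mInt p κ 2 / mInt p κ 0) with hd_def
  have hd0 : 0 ≤ d := Real.sqrt_nonneg _
  have hd2 : d ^ 2 = mInt p κ 2 / mInt p κ 0 := Real.sq_sqrt (div_nonneg hm2 ha.le)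
  set C₁ : ℝ := Real.cosh (κ * d) with hC1_def
  set C₂ : ℝ := Real.sinh (κ * d) with hC2_def
  have hK : 0 ≤ ∫ u in (0:ℝ)..1,
      (u ^ 2 - d ^ 2) *
        (u * (Real.exp (κ * u) - Real.exp (-(κ * u))) * C₁
          - d * C₂ * (Real.exp (κ * u) + Real.exp (-(κ * u)))) * (1 - u ^ 2) ^ c := by
    apply intervalIntegral.integral_nonneg (by norm_num : (0:ℝ) ≤ 1)
    intro u hu
    obtain ⟨h1, h2⟩ := hu
    have hx : (0:ℝ) ≤ 1 - u ^ 2 := by nlinarith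
    exact mul_nonneg (key_pt κ u d h1 hd0 hκ.le) (Real.rpow_nonneg hx c)
  have hKexp : (∫ u in (0:ℝ)..1,
      (u ^ 2 - d ^ 2) *
        (u * (Real.exp (κ * u) - Real.exp (-(κ * u))) * C₁
          - d * C₂ * (Real.exp (κ * u) + Real.exp (-(κ * u)))) * (1 - u ^ 2) ^ c)
      = C₁ * mInt p κ 3 - (d * C₂) * mInt p κ 2 - (d ^ 2 * C₁) * mInt p κ 1
        + (d ^ 3 * C₂) * mInt p κ 0 := by
    rw [mRefl hp κ 0, mRefl hp κ 1, mRefl hp κ 2, mRefl hp κ 3]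
    rw [← intervalIntegral.integral_const_mul, ← intervalIntegral.integral_const_mul, ← intervalIntegral.integral_const_mul, ← intervalIntegral.integral_const_mul,
      ← integral_sub ((intR hp κ 3).const_mul _) ((intR hp κ 2).const_mul _),
      ← integral_sub (((intR hp κ 3).const_mul _).sub ((intR hp κ 2).const_mul _))
        ((intR hp κ 1).const_mul _),
      ← integral_add ((((intR hp κ 3).const_mul _).sub ((intR hp κ 2).const_mul _)).sub
        ((intR hp κ 1).const_mul _)) ((intR hp κ 0).const_mul _)]
    apply integral_congr
    intro u _
    simp only [pow_zero, pow_one, pow_succ, one_mul, neg_one_mul, neg_mul, mul_neg, neg_neg]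
    ring
  rw [hKexp] at hK
  have hcosh : 0 < C₁ := Real.cosh_pos _
  have hd2m : d ^ 2 * mInt p κ 0 = mInt p κ 2 := by
    rw [hd2]; field_simp
  have h6 : d ^ 3 * C₂ * mInt p κ 0 = d * C₂ * mInt p κ 2 := by
    have : d ^ 3 * mInt p κ 0 = d * (d ^ 2 * mInt p κ 0) := by ring
    rw [← hd2m]; ring
  have h7 : 0 ≤ C₁ * (mInt p κ 3 - d ^ 2 * mInt p κ 1) := by nlinarith [hK, h6]
  have h8 : 0 ≤ mInt p κ 3 - d ^ 2 * mInt p κ 1 := by nlinarith [h7, hcosh]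
  have h9 : mInt p κ 1 * (d ^ 2 * mInt p κ 0) = mInt p κ 1 * mInt p κ 2 := by rw [hd2m]
  nlinarith [mul_nonneg ha.le h8, h9]

lemma recm {p : ℕ} (hp : 2 ≤ p) (κ : ℝ) :
    κ * mInt p κ 0 * mInt (p + 2) κ 0 =
      (p : ℝ) * mInt p κ 1 * mInt (p + 2) κ 0 + κ * mInt p κ 1 * mInt (p + 2) κ 1 := by
  have hI := idI hp κ
  have hII := idII hp κ
  have hs : mInt p κ 2 = mInt p κ 0 - mInt (p + 2) κ 0 := by
    have := msplit hp κ 0; norm_num at this; exact this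
  rw [hs] at hII
  linear_combination mInt p κ 0 * hI - mInt p κ 1 * hII

lemma quadm {p : ℕ} (hp : 2 ≤ p) {κ : ℝ} (hκ : 0 < κ) :
    κ * (mInt p κ 0) ^ 2 ≤ (p : ℝ) * (mInt p κ 0 * mInt p κ 1) + κ * (mInt p κ 1) ^ 2 := by
  have hrec := recm hp κ
  set a := mInt p κ 0
  set b := mInt p κ 1
  set a' := mInt (p + 2) κ 0
  set b' := mInt (p + 2) κ 1
  have ha : 0 < a := m0_pos hp κ
  have hb : 0 < b := m1_pos hp hκ
  have ha' : 0 < a' := m0_pos (by omega) κ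
  have hs0 : mInt p κ 2 = a - a' := by
    have := msplit hp κ 0; norm_num at this; exact this
  have hs1 : mInt p κ 3 = b - b' := by
    have := msplit hp κ 1; norm_num at this; exact this
  have hM : a * b' ≤ b * a' := by
    have := mono_m hp hκ
    rw [hs0, hs1] at this
    nlinarith [this]
  have h1 : κ * b * (a * b') ≤ κ * b * (b * a') :=
    mul_le_mul_of_nonneg_left hM (by positivity)
  have h2 : a * (κ * a * a') = a * ((p : ℝ) * b * a' + κ * b * b') := by
    linear_combination a * hrec
  have key : κ * a ^ 2 * a' ≤ ((p : ℝ) * (a * b) + κ * b ^ 2) * a' := by nlinarith [h1, h2]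
  exact le_of_mul_le_mul_right key ha'

lemma lowerCore {p : ℕ} (hp : 2 ≤ p) {κ : ℝ} (hκ : 0 < κ) {σ : ℝ} (hσ0 : 0 ≤ σ)
    (hσ : σ ^ 2 = (p : ℝ) ^ 2 / 4 + κ ^ 2) :
    κ / ((p : ℝ) / 2 + σ) ≤ mInt p κ 1 / mInt p κ 0 := by
  have hp' : (2 : ℝ) ≤ p := by exact_mod_cast hp
  set a := mInt p κ 0
  set b := mInt p κ 1
  have ha : 0 < a := m0_pos hp κ
  have hb : 0 < b := m1_pos hp hκ
  set D : ℝ := (p : ℝ) / 2 + σ with hD_def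
  have hD : 0 < D := by rw [hD_def]; linarith
  have hD2 : D ^ 2 = (p : ℝ) * D + κ ^ 2 := by rw [hD_def]; linear_combination hσ
  have hq := quadm hp hκ
  rw [div_le_div_iff₀ hD ha]
  have hiden : (b * D - κ * a) * (κ * (b * D + κ * a) + (p : ℝ) * a * D)
      = D ^ 2 * (κ * b ^ 2 + (p : ℝ) * (a * b) - κ * a ^ 2) := by
    linear_combination (κ * a ^ 2) * hD2
  have hfac2 : 0 < κ * (b * D + κ * a) + (p : ℝ) * a * D := by
    have h3 : 0 < b * D := mul_pos hb hD
    have h4 : 0 < κ * a := mul_pos hκ ha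
    have h5 : 0 < (p : ℝ) * a * D := by positivity
    nlinarith [mul_pos hκ (add_pos h3 h4)]
  have h0 : 0 ≤ (b * D - κ * a) * (κ * (b * D + κ * a) + (p : ℝ) * a * D) := by
    rw [hiden]
    apply mul_nonneg (sq_nonneg D)
    linarith [hq]
  nlinarith [h0, hfac2]

lemma upperCore {p : ℕ} (hp : 2 ≤ p) {κ : ℝ} (hκ : 0 < κ) {S : ℝ} (hS0 : 0 ≤ S)
    (hS2 : S ^ 2 = ((p : ℝ) / 2 + 1) ^ 2 + κ ^ 2) :
    mInt p κ 1 / mInt p κ 0 ≤ κ / ((p : ℝ) / 2 - 1 + S) := by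
  have hp' : (2 : ℝ) ≤ p := by exact_mod_cast hp
  have hrec := recm hp κ
  set a := mInt p κ 0
  set b := mInt p κ 1
  set a' := mInt (p + 2) κ 0
  set b' := mInt (p + 2) κ 1
  have ha : 0 < a := m0_pos hp κ
  have hb : 0 < b := m1_pos hp hκ
  have ha' : 0 < a' := m0_pos (by omega) κ
  have hb' : 0 < b' := m1_pos (by omega) hκ
  have hq' : κ * a' ^ 2 ≤ ((p : ℝ) + 2) * (a' * b') + κ * b' ^ 2 := by
    have := quadm (p := p + 2) (by omega) hκ
    push_cast at this
    convert this using 3 <;> push_cast <;> ring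
  have hSgt : (p : ℝ) / 2 + 1 ≤ S := by nlinarith [hS2, hS0]
  have hD : 0 < (p : ℝ) / 2 - 1 + S := by linarith
  have hsq : (S * a') ^ 2 ≤ (κ * b' + ((p : ℝ) / 2 + 1) * a') ^ 2 := by
    nlinarith [mul_le_mul_of_nonneg_left hq' hκ.le]
  have step1 : S * a' ≤ κ * b' + ((p : ℝ) / 2 + 1) * a' := by
    have hL : 0 ≤ S * a' := mul_nonneg hS0 ha'.le
    have hR : 0 ≤ κ * b' + ((p : ℝ) / 2 + 1) * a' :=
      le_of_lt (add_pos (mul_pos hκ hb')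
        (mul_pos (by linarith : (0:ℝ) < (p : ℝ) / 2 + 1) ha'))
    have h10 := Real.sqrt_le_sqrt hsq
    rwa [Real.sqrt_sq hL, Real.sqrt_sq hR] at h10
  have step3 : b * ((p : ℝ) / 2 - 1 + S) * a' ≤ (κ * a) * a' := by
    have h6 : b * (S * a') ≤ b * (κ * b' + ((p : ℝ) / 2 + 1) * a') :=
      mul_le_mul_of_nonneg_left step1 hb.le
    nlinarith [h6, hrec]
  have step4 : b * ((p : ℝ) / 2 - 1 + S) ≤ κ * a := le_of_mul_le_mul_right step3 ha'
  rw [div_le_div_iff₀ ha hD]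
  linarith [step4]

theorem e1_bounds (p : ℕ) (hp : 2 ≤ p) (κ : ℝ) (hκ : 0 < κ) :
    (κ / p) / (1 / 2 + Real.sqrt (1 / 4 + (κ / p) ^ 2)) ≤ e1 p κ ∧
      e1 p κ ≤
        (κ / p) / (1 / 2 - 1 / p + Real.sqrt ((1 / 2 + 1 / p) ^ 2 + (κ / p) ^ 2)) := by
  have hp' : (2 : ℝ) ≤ p := by exact_mod_cast hp
  have hp0 : (0 : ℝ) < p := by linarith
  constructor
  · set s1 := Real.sqrt (1 / 4 + (κ / p) ^ 2) with hs1_def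
    have hs10 : 0 ≤ s1 := Real.sqrt_nonneg _
    have hs1sq : s1 ^ 2 = 1 / 4 + (κ / p) ^ 2 := Real.sq_sqrt (by positivity)
    have hσ2 : ((p : ℝ) * s1) ^ 2 = (p : ℝ) ^ 2 / 4 + κ ^ 2 := by
      rw [mul_pow, hs1sq]; field_simp
    have hlow := lowerCore hp hκ (by positivity : 0 ≤ (p : ℝ) * s1) hσ2
    have heq : (κ / p) / (1 / 2 + s1) = κ / ((p : ℝ) / 2 + (p : ℝ) * s1) := by
      rw [div_div]
      congr 1
      field_simp
    rw [heq]
    exact hlow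
  · set S' := Real.sqrt ((1 / 2 + 1 / (p : ℝ)) ^ 2 + (κ / p) ^ 2) with hS'_def
    have hS'0 : 0 ≤ S' := Real.sqrt_nonneg _
    have hS'sq : S' ^ 2 = (1 / 2 + 1 / (p : ℝ)) ^ 2 + (κ / p) ^ 2 := Real.sq_sqrt (by positivity)
    have hS2 : ((p : ℝ) * S') ^ 2 = ((p : ℝ) / 2 + 1) ^ 2 + κ ^ 2 := by
      rw [mul_pow, hS'sq]; field_simp
    have hup := upperCore hp hκ (by positivity : 0 ≤ (p : ℝ) * S') hS2
    have heq : (κ / p) / (1 / 2 - 1 / (p : ℝ) + S') = κ / ((p : ℝ) / 2 - 1 + (p : ℝ) * S') := by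
      rw [div_div]
      congr 1
      field_simp
    rw [heq]
    exact hup
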